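/- arXiv:1705.06122 — 5 statements merged into one kernel-verified Lean document; each statement's English description precedes it below -/
import Mathlib

section
/- Let p be a prime. Define the height of a rational number r = m/n (in lowest terms, n > 0) as height(r) = |m| + |n|. Let α = (m₁ p^k)/m₂ with m₁, m₂ coprime integers not divisible by p and k ≥ 1 (so α ∈ pℤ_p ∩ ℚ, α ≠ 0). Let j = ω_p(−m₂/m₁) ∈ {0,…,p−1} and α₁ = (−m₂ − j m₁)/m₁. Then height(α₁) ≤ height(α), i.e., |−m₂ − j m₁| + |m₁| ≤ |m₁| p^k + |m₂|. -/
/-- Height does not increase under one step of the `Φ₀^{[-1]}` algorithm: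
for `α = m₁p^k/m₂` and `j = ω_p(−m₂/m₁)`, the next remainder `α₁ = (−m₂ − j m₁)/m₁`
satisfies `|−m₂ − j m₁| + |m₁| ≤ |m₁| p^k + |m₂|`. -/
theorem stmt_4 (p : ℕ) [Fact p.Prime] (m₁ m₂ : ℤ) (k : ℕ) (hk : 1 ≤ k)
    (hco : IsCoprime m₁ m₂) (h1 : ¬ (p : ℤ) ∣ m₁) (h2 : ¬ (p : ℤ) ∣ m₂)
    (j : ℕ) (hj : j < p)
    (hdig : ‖-(m₂ : ℚ_[p]) / (m₁ : ℚ_[p]) - (j : ℚ_[p])‖ < 1) :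
    |(-m₂ - (j : ℤ) * m₁)| + |m₁| ≤ |m₁| * (p : ℤ) ^ k + |m₂| := by
  have htri : |(-m₂ - (j : ℤ) * m₁)| ≤ |m₂| + (j : ℤ) * |m₁| := by
    calc |(-m₂ - (j : ℤ) * m₁)| ≤ |(-m₂)| + |(j : ℤ) * m₁| := abs_sub _ _
    _ = |m₂| + (j : ℤ) * |m₁| := by
        rw [abs_neg, abs_mul, abs_of_nonneg (by positivity : (0:ℤ) ≤ (j:ℤ))]
  have hjp : (j : ℤ) + 1 ≤ (p : ℤ) := by exact_mod_cast hj
  have hpk : (p : ℤ) ≤ (p : ℤ) ^ k := by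
    calc (p : ℤ) = (p : ℤ) ^ 1 := (pow_one _).symm
    _ ≤ (p : ℤ) ^ k := pow_le_pow_right₀ (by exact_mod_cast (Fact.out : p.Prime).one_le) hk
  have key : ((j : ℤ) + 1) * |m₁| ≤ (p : ℤ) ^ k * |m₁| :=
    mul_le_mul_of_nonneg_right (hjp.trans hpk) (abs_nonneg m₁)
  nlinarith [abs_nonneg m₁]
end

section
/- Let p be a prime. Under the Φ₀^{[−1]} p-adic continued fraction algorithm (where for nonzero α ∈ pℤ_p one sets T(α) = −p^{ord_p(α)}/α − ω_p(−p^{ord_p(α)}/α), and T(0) = 0), every rational number α ∈ pℤ_p reaches 0 after finitely many iterations of T; i.e., every rational number has a finite Φ₀^{[−1]} continued fraction expansion. -/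
private lemma key_step (p : ℕ) [hp : Fact p.Prime] (q : ℚ) (hq0 : q ≠ 0)
    (hq1 : padicNorm p q < 1) (j : ℕ) (hj : j < p)
    (r : ℚ) (hr : r = -(p : ℚ) ^ (padicValRat p q) / q - (j : ℚ)) :
    (0 < q → r < 0 ∧ r.num.natAbs + r.den ≤ q.num.natAbs + q.den) ∧
    (q < 0 → r = 0 ∨ r.num.natAbs + r.den < q.num.natAbs + q.den) := by
  have hp1 : (1:ℚ) < (p:ℚ) := by exact_mod_cast hp.out.one_lt
  have hnum0 : q.num ≠ 0 := Rat.num_ne_zero.mpr hq0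
  -- the valuation is positive
  have hv : 0 < padicValRat p q := by
    by_contra hle
    push_neg at hle
    rw [padicNorm.eq_zpow_of_nonzero hq0] at hq1
    have h1 : (1:ℚ) ≤ (p:ℚ) ^ (-padicValRat p q) :=
      one_le_zpow₀ hp1.le (by omega)
    linarith
  have hknum : 0 < padicValInt p q.num := by
    rw [padicValRat_def] at hv; omega
  have hpnum : p ∣ q.num.natAbs := by
    by_contra h
    have h0 := padicValNat.eq_zero_of_not_dvd h
    rw [padicValInt] at hknum
    omega
  have hpden : ¬ p ∣ q.den := by
    intro h
    have hg := Nat.dvd_gcd hpnum h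
    rw [q.reduced] at hg
    exact hp.out.one_lt.ne' (Nat.dvd_one.mp hg)
  set k := padicValNat p q.num.natAbs with hkdef
  have hvk : padicValRat p q = (k : ℤ) := by
    rw [padicValRat_def, padicValNat.eq_zero_of_not_dvd hpden, padicValInt]
    omega
  have hk1 : 1 ≤ k := by
    rw [hvk] at hv; exact_mod_cast hv
  have hdvd : ((p:ℤ))^k ∣ q.num := by
    have h1 : ((p:ℤ))^k ∣ (q.num.natAbs : ℤ) := by
      exact_mod_cast Int.natCast_dvd_natCast.mpr (pow_padicValNat_dvd (p := p) (n := q.num.natAbs))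
    exact Int.dvd_natAbs.mp h1
  obtain ⟨a₀, ha₀⟩ := hdvd
  have ha₀0 : a₀ ≠ 0 := by
    rintro rfl; rw [mul_zero] at ha₀; exact hnum0 ha₀
  have hpk0 : (0:ℤ) < (p:ℤ)^k := pow_pos (by exact_mod_cast hp.out.pos) k
  have hppk : (p:ℤ) ≤ (p:ℤ)^k :=
    le_self_pow₀ (by exact_mod_cast hp.out.one_lt.le) (by omega)
  have hden0 : (0:ℤ) < (q.den : ℤ) := by exact_mod_cast q.pos
  -- rewrite r as an explicit integer fraction
  have hnumcast : (q.num : ℚ) = ((p:ℤ)^k : ℚ) * (a₀ : ℚ) := by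
    rw [ha₀]; push_cast; ring
  have hden0' : ((q.den : ℤ) : ℚ) ≠ 0 := by exact_mod_cast hden0.ne'
  have ha₀0' : ((a₀ : ℤ) : ℚ) ≠ 0 := by exact_mod_cast ha₀0
  have hmden : (q : ℚ) * ((q.den : ℤ) : ℚ) = (q.num : ℚ) :=
    (eq_div_iff hden0').mp (Rat.num_div_den q).symm
  have hfrac : -(p:ℚ) ^ k / q = ((-(q.den:ℤ) : ℤ) : ℚ) / ((a₀ : ℤ) : ℚ) := by
    rw [div_eq_div_iff hq0 ha₀0']
    push_cast
    push_cast at hmden hnumcast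
    linear_combination hmden + hnumcast
  have hr' : r = ((-((q.den:ℤ) + (j:ℤ) * a₀) : ℤ) : ℚ) / ((a₀ : ℤ) : ℚ) := by
    rw [hr, hvk, zpow_natCast, hfrac]
    push_cast
    field_simp
    ring
  set n : ℤ := -((q.den:ℤ) + (j:ℤ) * a₀) with hn
  have hrdiv : r = Rat.divInt n a₀ := by rw [hr', Rat.divInt_eq_div]
  have hrdvd : r.num ∣ n := by rw [hrdiv]; exact Rat.num_dvd n ha₀0
  have hddvd : (r.den : ℤ) ∣ a₀ := by rw [hrdiv]; exact Rat.den_dvd n a₀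
  have hden_le : (r.den : ℤ) ≤ |a₀| := by
    have h1 : r.den ∣ a₀.natAbs := by
      have := Int.natAbs_dvd_natAbs.mpr hddvd
      simpa using this
    have h2 : r.den ≤ a₀.natAbs := Nat.le_of_dvd (Int.natAbs_pos.mpr ha₀0) h1
    calc (r.den : ℤ) ≤ (a₀.natAbs : ℤ) := by exact_mod_cast h2
      _ = |a₀| := (Int.abs_eq_natAbs a₀).symm
  have hQnum : (q.num.natAbs : ℤ) = |q.num| := (Int.abs_eq_natAbs q.num).symm
  constructor
  · -- positive case
    intro hqpos
    have hnumpos : 0 < q.num := Rat.num_pos.mpr hqpos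
    have ha₀pos : 0 < a₀ := by
      rcases lt_trichotomy a₀ 0 with h | h | h
      · nlinarith [ha₀]
      · exact absurd h ha₀0
      · exact h
    have hnneg : n < 0 := by
      have : 0 ≤ (j:ℤ) * a₀ := by positivity
      omega
    have hrneg : r < 0 := by
      rw [hr']
      apply div_neg_of_neg_of_pos
      · exact_mod_cast hnneg
      · exact_mod_cast ha₀pos
    refine ⟨hrneg, ?_⟩
    have hnum_le : (r.num.natAbs : ℤ) ≤ |n| := by
      have h1 : r.num.natAbs ∣ n.natAbs := Int.natAbs_dvd_natAbs.mpr hrdvd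
      have h2 : r.num.natAbs ≤ n.natAbs := Nat.le_of_dvd (Int.natAbs_pos.mpr hnneg.ne) h1
      calc (r.num.natAbs : ℤ) ≤ (n.natAbs : ℤ) := by exact_mod_cast h2
        _ = |n| := (Int.abs_eq_natAbs n).symm
    have habsn : |n| = (q.den:ℤ) + (j:ℤ) * a₀ := by
      rw [hn, abs_neg, abs_of_pos]
      have : 0 ≤ (j:ℤ) * a₀ := by positivity
      omega
    have hja : (j:ℤ) * a₀ ≤ ((p:ℤ) - 1) * a₀ := by
      apply mul_le_mul_of_nonneg_right _ ha₀pos.le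
      omega
    have hpa : (p:ℤ) * a₀ ≤ (p:ℤ)^k * a₀ := by
      apply mul_le_mul_of_nonneg_right hppk ha₀pos.le
    have hQ : (q.num.natAbs : ℤ) = (p:ℤ)^k * a₀ := by
      rw [hQnum, abs_of_pos hnumpos, ha₀]
    have goal : (r.num.natAbs : ℤ) + (r.den : ℤ) ≤ (q.num.natAbs : ℤ) + (q.den : ℤ) := by
      rw [hQ]
      have := abs_of_pos ha₀pos
      nlinarith [hnum_le, hden_le, habsn]
    exact_mod_cast goal
  · -- negative case
    intro hqneg
    have hnumneg : q.num < 0 := Rat.num_neg.mpr hqneg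
    have ha₀neg : a₀ < 0 := by
      rcases lt_trichotomy a₀ 0 with h | h | h
      · exact h
      · exact absurd h ha₀0
      · nlinarith [ha₀]
    by_cases hn0 : n = 0
    · left
      rw [hrdiv, hn0]
      simp
    · right
      have hnum_le : (r.num.natAbs : ℤ) ≤ |n| := by
        have h1 : r.num.natAbs ∣ n.natAbs := Int.natAbs_dvd_natAbs.mpr hrdvd
        have h2 : r.num.natAbs ≤ n.natAbs := Nat.le_of_dvd (Int.natAbs_pos.mpr hn0) h1
        calc (r.num.natAbs : ℤ) ≤ (n.natAbs : ℤ) := by exact_mod_cast h2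
          _ = |n| := (Int.abs_eq_natAbs n).symm
      have hQ : (q.num.natAbs : ℤ) = (p:ℤ)^k * (-a₀) := by
        rw [hQnum, abs_of_neg hnumneg, ha₀]; ring
      have hA1 : 1 ≤ -a₀ := by omega
      have hja : (j:ℤ) * (-a₀) ≤ ((p:ℤ) - 1) * (-a₀) := by
        apply mul_le_mul_of_nonneg_right _ (by omega)
        omega
      have hpa : (p:ℤ) * (-a₀) ≤ (p:ℤ)^k * (-a₀) := by
        apply mul_le_mul_of_nonneg_right hppk (by omega)
      have hp2 : (2:ℤ) ≤ (p:ℤ) := by exact_mod_cast hp.out.two_le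
      have hAden : (r.den : ℤ) ≤ -a₀ := by
        rw [abs_of_neg ha₀neg] at hden_le; exact hden_le
      have goal : (r.num.natAbs : ℤ) + (r.den : ℤ) < (q.num.natAbs : ℤ) + (q.den : ℤ) := by
        rw [hQ]
        have hneq : n = (j:ℤ) * (-a₀) - (q.den:ℤ) := by rw [hn]; ring
        have h2A : 2 * (-a₀) ≤ (p:ℤ) * (-a₀) := by
          apply mul_le_mul_of_nonneg_right hp2 (by omega)
        rcases le_or_gt n 0 with hns | hns
        · have habs : |n| = (q.den:ℤ) - (j:ℤ) * (-a₀) := by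
            rw [abs_of_nonpos hns, hneq]; ring
          have hjnn : 0 ≤ (j:ℤ) * (-a₀) := by positivity
          linarith [hnum_le, hAden, hpa, h2A, hA1]
        · have habs : |n| = (j:ℤ) * (-a₀) - (q.den:ℤ) := by
            rw [abs_of_pos hns, hneq]
          linarith [hnum_le, hAden, hja, hpa, hden0]
      exact_mod_cast goal

private lemma step_lemma (p : ℕ) [hp : Fact p.Prime] (T : ℚ_[p] → ℚ_[p])
    (hT : ∀ α : ℚ_[p], α ≠ 0 → ‖α‖ < 1 →
      ∃ j : ℕ, j < p ∧
        ‖-(p : ℚ_[p]) ^ α.valuation / α - (j : ℚ_[p])‖ < 1 ∧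
        T α = -(p : ℚ_[p]) ^ α.valuation / α - (j : ℚ_[p]))
    (q : ℚ) (hq0 : q ≠ 0) (hq1 : ‖(q : ℚ_[p])‖ < 1) :
    ∃ r : ℚ, T (q : ℚ_[p]) = (r : ℚ_[p]) ∧ ‖(r : ℚ_[p])‖ < 1 ∧
      (0 < q → r < 0 ∧ r.num.natAbs + r.den ≤ q.num.natAbs + q.den) ∧
      (q < 0 → r = 0 ∨ r.num.natAbs + r.den < q.num.natAbs + q.den) := by
  have hq0' : (q : ℚ_[p]) ≠ 0 := by exact_mod_cast Rat.cast_ne_zero.mpr hq0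
  obtain ⟨j, hjp, hnorm, hTq⟩ := hT (q : ℚ_[p]) hq0' hq1
  refine ⟨-(p : ℚ) ^ (padicValRat p q) / q - (j : ℚ), ?_, ?_, ?_⟩
  · rw [hTq, Padic.valuation_ratCast]
    push_cast
    ring
  · rw [show ((-(p : ℚ) ^ (padicValRat p q) / q - (j : ℚ) : ℚ) : ℚ_[p]) =
      -(p : ℚ_[p]) ^ ((q : ℚ_[p]).valuation) / (q : ℚ_[p]) - (j : ℚ_[p]) by
        rw [Padic.valuation_ratCast]; push_cast; ring]
    exact hnorm
  · have hqn : padicNorm p q < 1 := by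
      rw [Padic.eq_padicNorm] at hq1
      exact_mod_cast hq1
    exact key_step p q hq0 hqn j hjp _ rfl

/-- Proposition: every rational number in `pℤ_p` has a finite `Φ₀^{[-1]}` continued
fraction expansion.  `T` is the `Φ₀^{[-1]}` step: `T(0) = 0` and for nonzero
`α ∈ pℤ_p`, `T(α) = −p^{ord_p α}/α − ω_p(−p^{ord_p α}/α)` where the digit
`j = ω_p(·)` is characterized by `j < p` and `‖· − j‖ < 1`. -/
theorem stmt_5 (p : ℕ) [Fact p.Prime] (T : ℚ_[p] → ℚ_[p])
    (hT0 : T 0 = 0)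
    (hT : ∀ α : ℚ_[p], α ≠ 0 → ‖α‖ < 1 →
      ∃ j : ℕ, j < p ∧
        ‖-(p : ℚ_[p]) ^ α.valuation / α - (j : ℚ_[p])‖ < 1 ∧
        T α = -(p : ℚ_[p]) ^ α.valuation / α - (j : ℚ_[p])) :
    ∀ q : ℚ, ‖(q : ℚ_[p])‖ < 1 → ∃ n : ℕ, T^[n] (q : ℚ_[p]) = 0 := by
  suffices h : ∀ N : ℕ, ∀ q : ℚ, q.num.natAbs + q.den ≤ N → ‖(q : ℚ_[p])‖ < 1 →
      ∃ n : ℕ, T^[n] (q : ℚ_[p]) = 0 by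
    intro q hq
    exact h (q.num.natAbs + q.den) q le_rfl hq
  intro N
  induction N using Nat.strong_induction_on with
  | _ N IH =>
    intro q hN hq
    by_cases hq0 : q = 0
    · exact ⟨0, by simp [hq0]⟩
    obtain ⟨r, hTr, hrn, hpos, hneg⟩ := step_lemma p T hT q hq0 hq
    rcases lt_or_gt_of_ne hq0 with hqneg | hqpos
    · rcases hneg hqneg with h0 | hlt
      · exact ⟨1, by rw [Function.iterate_one, hTr, h0]; exact Rat.cast_zero⟩
      · obtain ⟨n, hn⟩ := IH (r.num.natAbs + r.den) (lt_of_lt_of_le hlt hN) r le_rfl hrn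
        exact ⟨n + 1, by rw [Function.iterate_succ_apply, hTr]; exact hn⟩
    · obtain ⟨hrneg, hle⟩ := hpos hqpos
      have hr0 : r ≠ 0 := ne_of_lt hrneg
      obtain ⟨r', hTr', hrn', hpos', hneg'⟩ := step_lemma p T hT r hr0 hrn
      rcases hneg' hrneg with h0 | hlt
      · refine ⟨1 + 1, ?_⟩
        rw [Function.iterate_succ_apply, hTr, Function.iterate_one, hTr', h0]
        exact Rat.cast_zero
      · obtain ⟨n, hn⟩ := IH (r'.num.natAbs + r'.den)
          (lt_of_lt_of_le (lt_of_lt_of_le hlt hle) hN) r' le_rfl hrn'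
        refine ⟨n + 1 + 1, ?_⟩
        rw [Function.iterate_succ_apply, hTr, Function.iterate_succ_apply, hTr']
        exact hn
end

section
/- Let p be a prime, α ∈ pℤ_p ∩ ℚ nonzero, written α = m₁ p^k / m₂ with m₁, m₂ coprime integers not divisible by p, and k ≥ 1. Then the Φ₀^{[−1]} remainder T(α) = −p^k/α − ω_p(−p^k/α) equals (−m₂ − j m₁)/m₁ where j = ω_p(−m₂/m₁); in particular T(α) is again a rational number in pℤ_p whose denominator (in lowest terms) divides m₁. -/
/-- Explicit form of the `Φ₀^{[-1]}` remainder: for `α = m₁p^k/m₂` and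
`j = ω_p(−m₂/m₁)`, one has `−p^k/α − j = (−m₂ − j m₁)/m₁ ∈ pℤ_p`, a rational
whose reduced denominator divides `m₁`. -/
theorem stmt_6 (p : ℕ) [Fact p.Prime] (m₁ m₂ : ℤ) (k : ℕ) (hk : 1 ≤ k)
    (hco : IsCoprime m₁ m₂) (h1 : ¬ (p : ℤ) ∣ m₁) (h2 : ¬ (p : ℤ) ∣ m₂)
    (α : ℚ) (hα : α = (m₁ : ℚ) * (p : ℚ) ^ k / (m₂ : ℚ))
    (j : ℕ) (hj : j < p)
    (hdig : ‖-(m₂ : ℚ_[p]) / (m₁ : ℚ_[p]) - (j : ℚ_[p])‖ < 1) :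
    -(p : ℚ_[p]) ^ k / (α : ℚ_[p]) - (j : ℚ_[p])
        = ((-m₂ - (j : ℤ) * m₁ : ℤ) : ℚ_[p]) / (m₁ : ℚ_[p]) ∧
    ‖((-m₂ - (j : ℤ) * m₁ : ℤ) : ℚ_[p]) / (m₁ : ℚ_[p])‖ < 1 ∧
    ((((-m₂ - (j : ℤ) * m₁ : ℤ) : ℚ) / (m₁ : ℚ)).den : ℤ) ∣ m₁ := by
  have hp : (p : ℤ) ≠ 0 := Int.natCast_ne_zero.mpr (Fact.out (p := p.Prime)).ne_zero
  have hm₁ : m₁ ≠ 0 := by rintro rfl; exact h1 (dvd_zero _)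
  have hm₂ : m₂ ≠ 0 := by rintro rfl; exact h2 (dvd_zero _)
  have hm₁p : (m₁ : ℚ_[p]) ≠ 0 := Int.cast_ne_zero.mpr hm₁
  have hm₂p : (m₂ : ℚ_[p]) ≠ 0 := Int.cast_ne_zero.mpr hm₂
  have hpp : (p : ℚ_[p]) ≠ 0 :=
    Nat.cast_ne_zero.mpr (Fact.out (p := p.Prime)).ne_zero
  have hcast : (α : ℚ_[p]) = (m₁ : ℚ_[p]) * (p : ℚ_[p]) ^ k / (m₂ : ℚ_[p]) := by
    rw [hα]; push_cast; ring
  have heq : -(p : ℚ_[p]) ^ k / (α : ℚ_[p]) - (j : ℚ_[p])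
      = ((-m₂ - (j : ℤ) * m₁ : ℤ) : ℚ_[p]) / (m₁ : ℚ_[p]) := by
    rw [hcast]; push_cast; field_simp
  refine ⟨heq, ?_, ?_⟩
  · have : ((-m₂ - (j : ℤ) * m₁ : ℤ) : ℚ_[p]) / (m₁ : ℚ_[p])
        = -(m₂ : ℚ_[p]) / (m₁ : ℚ_[p]) - (j : ℚ_[p]) := by
      push_cast; field_simp
    rw [this]; exact hdig
  · rw [← Rat.divInt_eq_div]; exact Rat.den_dvd _ _
end

section
/- Let p be a prime, K ⊂ ℚ_p a cubic field, K = ℚ(z) where z is an algebraic integer with minimal polynomial x³ + a₁x² + a₂x + a₃p^k (a_i ∈ ℤ, ord_p(a₂) = ord_p(a₃) = 0, k > 0). Then for α = (z, z²), the Φ₁^{[ε,z]} continued fraction remainders satisfy: α₁ = (εz, −ε(z² + a₁z)/a₃), α₂ = (−εz/a₃, −(z² + a₁z)/a₃), α₃ = (z, z² + a₁z), α₄ = α₁; hence (z, z²) has an eventually periodic Φ₁^{[ε,z]} expansion with period 3 starting at index 1. -/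
/-- Normalization of one component of the 2-dimensional `Φ₁^{[ε,z]}` step on a cubic
field `K = ℚ(z)`: given the value `g` (before subtraction of the digit), the output
`h` is `(g − ω_p(g))/a' − ⟨a₀/a'⟩_p`, where `g − ω_p(g) = a₀ + a₁ z + a₂ z²` with
rational coefficients, `a'` is the p-free positive part of the gcd of the numerators
of `a₁, a₂` (`a' = 1` if both vanish), and `⟨x⟩_p ∈ pℤ_p ∩ ℚ` is the positive-power
part of the p-adic expansion of `x` (so `x − ⟨x⟩_p = N/p^t`, `0 ≤ N < p^{t+1}`). -/
def PhiComp (p : ℕ) [Fact p.Prime] (z g h : ℚ_[p]) : Prop :=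
  ∃ (j : ℕ) (a₀ a₁ a₂ : ℚ) (a' : ℕ) (c : ℚ) (t N : ℕ),
    j < p ∧ ‖g - (j : ℚ_[p])‖ < 1 ∧
    g - (j : ℚ_[p]) = (a₀ : ℚ_[p]) + (a₁ : ℚ_[p]) * z + (a₂ : ℚ_[p]) * z ^ 2 ∧
    0 < a' ∧
    ((a₁ = 0 ∧ a₂ = 0 ∧ a' = 1) ∨
      (¬ (a₁ = 0 ∧ a₂ = 0) ∧ ¬ p ∣ a' ∧
        ∃ s : ℕ, Nat.gcd a₁.num.natAbs a₂.num.natAbs = a' * p ^ s)) ∧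
    a₀ / (a' : ℚ) - c = (N : ℚ) / (p : ℚ) ^ t ∧ N < p ^ (t + 1) ∧
    ‖(c : ℚ_[p])‖ < 1 ∧
    h = ((a₀ / (a' : ℚ) - c : ℚ) : ℚ_[p]) + ((a₁ / (a' : ℚ) : ℚ) : ℚ_[p]) * z
          + ((a₂ / (a' : ℚ) : ℚ) : ℚ_[p]) * z ^ 2

/-- One full step of the 2-dimensional `Φ₁^{[ε,z]}` algorithm with pivot index 1:
normalize `g₁ = εp^{ord β₁}/β₁` and `g₂ = εp^{max(ord β₁ − ord β₂,0)} β₂/β₁`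
componentwise, then apply the cyclic shift `S`. -/
def PhiStep2 (p : ℕ) [Fact p.Prime] (ε : ℤ) (z : ℚ_[p])
    (α β : ℚ_[p] × ℚ_[p]) : Prop :=
  ∃ h₁ h₂ : ℚ_[p],
    β = (h₂, h₁) ∧
    PhiComp p z ((ε : ℚ_[p]) * (p : ℚ_[p]) ^ (α.1).valuation / α.1) h₁ ∧
    PhiComp p z
      ((ε : ℚ_[p]) * (p : ℚ_[p]) ^ (max ((α.1).valuation - (α.2).valuation) 0)
        * α.2 / α.1) h₂


section Helpers

variable {p : ℕ} [Fact p.Prime]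

lemma my_int_norm_one {n : ℤ} (h : ¬ (p:ℤ) ∣ n) : ‖(n : ℚ_[p])‖ = 1 := by
  rcases eq_or_lt_of_le (Padic.norm_int_le_one (p := p) n) with h' | h'
  · exact h'
  · exact absurd ((Padic.norm_intCast_lt_one_iff (k := n)).1 h') h

lemma my_digit (m n : ℤ) (hn : ¬ (p:ℤ) ∣ n) :
    ∃ j : ℕ, j < p ∧ ‖(((m / n : ℚ) : ℚ_[p])) - (j : ℚ_[p])‖ < 1 := by
  haveI : NeZero p := ⟨(Fact.out : p.Prime).ne_zero⟩
  have hn0 : n ≠ 0 := by rintro rfl; exact hn (dvd_zero _)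
  have hnZ : (n : ZMod p) ≠ 0 := by
    rwa [Ne, ZMod.intCast_zmod_eq_zero_iff_dvd]
  set u : ZMod p := (m : ZMod p) * (n : ZMod p)⁻¹ with hu
  refine ⟨u.val, u.val_lt, ?_⟩
  have hdvd : (p:ℤ) ∣ m - (u.val : ℤ) * n := by
    rw [← ZMod.intCast_zmod_eq_zero_iff_dvd]
    push_cast
    rw [ZMod.natCast_val, ZMod.cast_id, hu]
    field_simp
    ring
  have hq : ((m / n : ℚ) : ℚ_[p]) - (u.val : ℚ_[p])
      = ((m - (u.val:ℤ) * n : ℤ) : ℚ_[p]) / ((n:ℤ) : ℚ_[p]) := by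
    have : ((n:ℤ) : ℚ_[p]) ≠ 0 := by
      rw [Ne, Int.cast_eq_zero]; exact hn0
    push_cast
    field_simp
  rw [hq, norm_div, my_int_norm_one hn, div_one]
  rwa [Padic.norm_intCast_lt_one_iff]

lemma my_mk_phicomp (z : ℚ_[p]) (hz1 : ‖z‖ < 1) (r₀ r₁ r₂ : ℚ) (j : ℕ)
    (hj : j < p) (hj0 : ‖((r₀ : ℚ_[p])) - (j : ℚ_[p])‖ < 1)
    (hr1 : ‖(r₁ : ℚ_[p])‖ ≤ 1) (hr2 : ‖(r₂ : ℚ_[p])‖ ≤ 1)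
    (hgcd : Nat.gcd r₁.num.natAbs r₂.num.natAbs = 1)
    (hne : ¬ (r₁ = 0 ∧ r₂ = 0)) (g h : ℚ_[p])
    (hg : g = (r₀ : ℚ_[p]) + (r₁ : ℚ_[p]) * z + (r₂ : ℚ_[p]) * z ^ 2)
    (hh : h = (r₁ : ℚ_[p]) * z + (r₂ : ℚ_[p]) * z ^ 2) :
    PhiComp p z g h := by
  have hz0 : 0 ≤ ‖z‖ := norm_nonneg z
  have h1 : ‖(r₁ : ℚ_[p]) * z‖ < 1 := by
    rw [norm_mul]
    calc ‖(r₁ : ℚ_[p])‖ * ‖z‖ ≤ 1 * ‖z‖ := by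
          exact mul_le_mul_of_nonneg_right hr1 hz0
      _ = ‖z‖ := one_mul _
      _ < 1 := hz1
  have h2 : ‖(r₂ : ℚ_[p]) * z ^ 2‖ < 1 := by
    rw [norm_mul, norm_pow]
    calc ‖(r₂ : ℚ_[p])‖ * ‖z‖ ^ 2 ≤ 1 * ‖z‖ ^ 2 := by
          exact mul_le_mul_of_nonneg_right hr2 (by positivity)
      _ = ‖z‖ ^ 2 := one_mul _
      _ < 1 := by nlinarith
  have hgj : g - (j : ℚ_[p]) = ((r₀ : ℚ_[p]) - (j : ℚ_[p]))
      + (r₁ : ℚ_[p]) * z + (r₂ : ℚ_[p]) * z ^ 2 := by rw [hg]; ring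
  refine ⟨j, r₀ - j, r₁, r₂, 1, r₀ - j, 0, 0, hj, ?_, ?_, one_pos, ?_, ?_, ?_, ?_, ?_⟩
  · rw [hgj]
    calc ‖(((r₀:ℚ_[p]) - j) + (r₁:ℚ_[p]) * z) + (r₂:ℚ_[p]) * z ^ 2‖
        ≤ max ‖((r₀:ℚ_[p]) - j) + (r₁:ℚ_[p]) * z‖ ‖(r₂:ℚ_[p]) * z ^ 2‖ :=
          Padic.nonarchimedean _ _
      _ < 1 := by
          rw [max_lt_iff]
          refine ⟨lt_of_le_of_lt (Padic.nonarchimedean _ _) ?_, h2⟩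
          rw [max_lt_iff]; exact ⟨hj0, h1⟩
  · rw [hgj]; push_cast; ring
  · right
    exact ⟨hne, fun hd => (Fact.out : p.Prime).ne_one (Nat.dvd_one.mp hd), 0,
      by simpa using hgcd⟩
  · norm_num
  · simpa using (Fact.out : p.Prime).pos
  · simpa using hj0
  · rw [hh]; push_cast; ring

lemma my_num_natAbs_one {m : ℤ} (n : ℤ) (hm : m.natAbs = 1) (hn : n ≠ 0) :
    ((m : ℚ) / (n : ℚ)).num.natAbs = 1 := by
  rw [← Rat.divInt_eq_div]
  have hd := Rat.num_dvd m hn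
  have := Int.natAbs_dvd_natAbs.2 hd
  rw [hm] at this
  exact Nat.dvd_one.1 this

lemma my_ratdiv_norm_le (m : ℤ) {n : ℤ} (hn : ¬ (p:ℤ) ∣ n) :
    ‖((((m : ℚ) / (n : ℚ)) : ℚ) : ℚ_[p])‖ ≤ 1 := by
  push_cast
  rw [norm_div, my_int_norm_one hn, div_one]
  exact Padic.norm_int_le_one m

lemma my_mk_phicomp' (z : ℚ_[p]) (hz1 : ‖z‖ < 1) (m₀ m₁ m₂ n : ℤ)
    (hn : ¬ (p:ℤ) ∣ n)
    (habs : m₂.natAbs = 1 ∨ (m₂ = 0 ∧ m₁.natAbs = 1))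
    (g h : ℚ_[p])
    (hg : g * ((n : ℤ) : ℚ_[p]) = (m₀ : ℚ_[p]) + (m₁ : ℚ_[p]) * z + (m₂ : ℚ_[p]) * z ^ 2)
    (hh : h * ((n : ℤ) : ℚ_[p]) = (m₁ : ℚ_[p]) * z + (m₂ : ℚ_[p]) * z ^ 2) :
    PhiComp p z g h := by
  have hn0 : n ≠ 0 := by rintro rfl; exact hn (dvd_zero _)
  have hnQ : ((n : ℤ) : ℚ_[p]) ≠ 0 := by exact_mod_cast hn0
  obtain ⟨j, hjlt, hjn⟩ := my_digit m₀ n hn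
  refine my_mk_phicomp z hz1 ((m₀ : ℚ) / n) ((m₁ : ℚ) / n) ((m₂ : ℚ) / n) j hjlt
    (by push_cast at hjn ⊢; exact hjn) (my_ratdiv_norm_le m₁ hn) (my_ratdiv_norm_le m₂ hn)
    ?_ ?_ g h ?_ ?_
  · rcases habs with h2 | ⟨h2, h1⟩
    · rw [my_num_natAbs_one n h2 hn0, Nat.gcd_one_right]
    · rw [h2]
      norm_num
      rw [my_num_natAbs_one n h1 hn0]
  · rcases habs with h2 | ⟨h2, h1⟩
    · rintro ⟨-, hr2⟩
      rw [div_eq_zero_iff] at hr2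
      rcases hr2 with hr2 | hr2
      · rw [Int.cast_eq_zero] at hr2; subst hr2; simp at h2
      · rw [Int.cast_eq_zero] at hr2; exact hn0 hr2
    · rintro ⟨hr1, -⟩
      rw [div_eq_zero_iff] at hr1
      rcases hr1 with hr1 | hr1
      · rw [Int.cast_eq_zero] at hr1; subst hr1; simp at h1
      · rw [Int.cast_eq_zero] at hr1; exact hn0 hr1
  · push_cast
    field_simp
    linear_combination hg
  · push_cast
    field_simp
    linear_combination hh

lemma my_val_of_norm {x : ℚ_[p]} (hx : x ≠ 0) {k : ℤ}
    (h : ‖x‖ = (p : ℝ) ^ (-k)) : x.valuation = k := by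
  have h1p : 1 < (p : ℝ) := by exact_mod_cast (Fact.out : p.Prime).one_lt
  have := (Padic.norm_eq_zpow_neg_valuation hx).symm.trans h
  have := (zpow_right_strictMono₀ h1p).injective this
  omega

lemma my_max_zero {x y : ℚ_[p]} (hx : x ≠ 0) (hy : y ≠ 0) (h : ‖y‖ ≤ ‖x‖) :
    max (x.valuation - y.valuation) 0 = 0 := by
  have h1p : 1 < (p : ℝ) := by exact_mod_cast (Fact.out : p.Prime).one_lt
  rw [Padic.norm_eq_zpow_neg_valuation hy, Padic.norm_eq_zpow_neg_valuation hx] at h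
  have := (zpow_right_strictMono₀ h1p).le_iff_le.1 h
  omega

lemma my_j_unique {g : ℚ_[p]} {j j' : ℕ} (hj : j < p) (hj' : j' < p)
    (h1 : ‖g - (j : ℚ_[p])‖ < 1) (h2 : ‖g - (j' : ℚ_[p])‖ < 1) : j = j' := by
  have hsub : ‖(((j : ℤ) - (j' : ℤ) : ℤ) : ℚ_[p])‖ < 1 := by
    have he : (((j : ℤ) - (j' : ℤ) : ℤ) : ℚ_[p]) = (g - (j' : ℚ_[p])) - (g - (j : ℚ_[p])) := by
      push_cast; ring
    rw [he]
    calc ‖(g - (j' : ℚ_[p])) - (g - (j : ℚ_[p]))‖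
        = ‖(g - (j' : ℚ_[p])) + (-(g - (j : ℚ_[p])))‖ := by rw [sub_eq_add_neg]
      _ ≤ max ‖g - (j' : ℚ_[p])‖ ‖-(g - (j : ℚ_[p]))‖ := Padic.nonarchimedean _ _
      _ = max ‖g - (j' : ℚ_[p])‖ ‖g - (j : ℚ_[p])‖ := by rw [norm_neg]
      _ < 1 := max_lt h2 h1
  have hdvd : (p : ℤ) ∣ (j : ℤ) - (j' : ℤ) :=
    Padic.norm_intCast_lt_one_iff.1 hsub
  have h0 : (j : ℤ) - (j' : ℤ) = 0 := by
    refine Int.eq_zero_of_abs_lt_dvd hdvd ?_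
    rw [abs_sub_lt_iff]
    omega
  omega

lemma my_aprime_unique {a' a'' s s' : ℕ} {G : ℕ} (hp1 : ¬ p ∣ a') (hp2 : ¬ p ∣ a'')
    (h1 : G = a' * p ^ s) (h2 : G = a'' * p ^ s') (ha' : 0 < a') (ha'' : 0 < a'') :
    a' = a'' := by
  have hpp : p.Prime := Fact.out
  rcases le_total s s' with h | h
  · obtain ⟨d, rfl⟩ := Nat.exists_eq_add_of_le h
    rw [h1, pow_add] at h2
    have h2' : a' * p ^ s = a'' * p ^ d * p ^ s := by rw [h2]; ring
    have he : a' = a'' * p ^ d := Nat.eq_of_mul_eq_mul_right (pow_pos hpp.pos s) h2'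
    cases d with
    | zero => simpa using he
    | succ d => exact absurd (he ▸ ⟨a'' * p ^ d, by ring⟩) hp1
  · obtain ⟨d, rfl⟩ := Nat.exists_eq_add_of_le h
    rw [h2, pow_add] at h1
    have h1' : a'' * p ^ s' = a' * p ^ d * p ^ s' := by rw [h1]; ring
    have he : a'' = a' * p ^ d := Nat.eq_of_mul_eq_mul_right (pow_pos hpp.pos s') h1'
    cases d with
    | zero => simpa using he.symm
    | succ d => exact absurd (he ▸ ⟨a' * p ^ d, by ring⟩) hp2

lemma my_c_unique {a c c' : ℚ} {t N t' N' : ℕ}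
    (h1 : a - c = (N : ℚ) / (p:ℚ) ^ t) (h2 : N < p ^ (t+1))
    (h3 : a - c' = (N' : ℚ) / (p:ℚ) ^ t') (h4 : N' < p ^ (t'+1))
    (h5 : ‖((c : ℚ_[p]))‖ < 1) (h6 : ‖((c' : ℚ_[p]))‖ < 1) : c = c' := by
  have hp0 : (0:ℚ) < (p:ℚ) := by exact_mod_cast (Fact.out : p.Prime).pos
  set m : ℤ := (N' : ℤ) * p ^ t - (N : ℤ) * p ^ t' with hm
  have hcc : (c - c' : ℚ) = (m : ℚ) / (p:ℚ) ^ (t + t') := by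
    have e : c - c' = (N' : ℚ) / (p:ℚ) ^ t' - (N : ℚ) / (p:ℚ) ^ t := by linarith
    rw [e, hm]; push_cast; field_simp; ring
  have hnorm : ‖((c - c' : ℚ) : ℚ_[p])‖ < 1 := by
    push_cast
    calc ‖(c:ℚ_[p]) - (c':ℚ_[p])‖ = ‖(c:ℚ_[p]) + (-(c':ℚ_[p]))‖ := by rw [sub_eq_add_neg]
      _ ≤ max ‖(c:ℚ_[p])‖ ‖-(c':ℚ_[p])‖ := Padic.nonarchimedean _ _
      _ = max ‖(c:ℚ_[p])‖ ‖(c':ℚ_[p])‖ := by rw [norm_neg]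
      _ < 1 := max_lt h5 h6
  have hcast : ((c - c' : ℚ) : ℚ_[p]) = ((m : ℤ) : ℚ_[p]) / ((p : ℚ_[p])) ^ (t + t') := by
    rw [hcc]; push_cast; ring
  have hpnorm : ‖((p : ℚ_[p])) ^ (t + t')‖ = (p:ℝ) ^ (-(t + t' : ℤ)) := by
    rw [norm_pow, Padic.norm_p]
    rw [inv_pow, ← zpow_natCast (p:ℝ), ← zpow_neg]
    norm_cast
  have hkey : ‖((m : ℤ) : ℚ_[p])‖ < (p:ℝ) ^ (-(t + t' : ℤ)) := by
    rw [hcast, norm_div, hpnorm] at hnorm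
    have hpR : (0:ℝ) < (p:ℝ) := by exact_mod_cast (Fact.out : p.Prime).pos
    have hpos : (0:ℝ) < (p:ℝ) ^ (-(t + t' : ℤ)) := zpow_pos hpR _
    exact (div_lt_one hpos).1 hnorm
  have hle : ‖((m : ℤ) : ℚ_[p])‖ ≤ (p:ℝ) ^ (-(t + t' + 1 : ℕ) : ℤ) := by
    rw [Padic.norm_le_pow_iff_norm_lt_pow_add_one]
    convert hkey using 2
    push_cast; ring
  have hdvd : ((p : ℤ)) ^ (t + t' + 1) ∣ m := by
    exact_mod_cast (Padic.norm_int_le_pow_iff_dvd m (t + t' + 1)).1 hle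
  have hppos : (0:ℤ) < (p:ℤ) := by exact_mod_cast (Fact.out : p.Prime).pos
  have b1 : (N' : ℤ) * p ^ t < (p:ℤ) ^ (t + t' + 1) := by
    have hb : (N' : ℤ) < (p:ℤ) ^ (t' + 1) := by exact_mod_cast h4
    calc (N' : ℤ) * p ^ t < (p:ℤ) ^ (t' + 1) * p ^ t := by
          exact mul_lt_mul_of_pos_right hb (by positivity)
      _ = (p:ℤ) ^ (t + t' + 1) := by ring
  have b2 : (N : ℤ) * p ^ t' < (p:ℤ) ^ (t + t' + 1) := by
    have hb : (N : ℤ) < (p:ℤ) ^ (t + 1) := by exact_mod_cast h2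
    calc (N : ℤ) * p ^ t' < (p:ℤ) ^ (t + 1) * p ^ t' := by
          exact mul_lt_mul_of_pos_right hb (by positivity)
      _ = (p:ℤ) ^ (t + t' + 1) := by ring
  have hm0 : m = 0 := by
    refine Int.eq_zero_of_abs_lt_dvd hdvd ?_
    rw [hm, abs_sub_lt_iff]
    constructor
    · have : (0:ℤ) ≤ (N : ℤ) * p ^ t' := by positivity
      linarith
    · have : (0:ℤ) ≤ (N' : ℤ) * p ^ t := by positivity
      linarith
  have : (c - c' : ℚ) = 0 := by rw [hcc, hm0]; simp
  linarith

lemma my_phicomp_unique (z : ℚ_[p])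
    (hind : ∀ c₀ c₁ c₂ : ℚ,
      (c₀ : ℚ_[p]) + (c₁ : ℚ_[p]) * z + (c₂ : ℚ_[p]) * z ^ 2 = 0 →
      c₀ = 0 ∧ c₁ = 0 ∧ c₂ = 0)
    {g h h' : ℚ_[p]} (H : PhiComp p z g h) (H' : PhiComp p z g h') : h = h' := by
  obtain ⟨j, a₀, a₁, a₂, a', c, t, N, hj, hgj, hexp, hapos, hdisj, hc, hN, hcn, hh⟩ := H
  obtain ⟨j', b₀, b₁, b₂, b', c', t', N', hj', hgj', hexp', hbpos, hdisj', hc', hN', hcn', hh'⟩ := H'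
  have hjj : j = j' := my_j_unique hj hj' hgj hgj'
  subst hjj
  have hcoef : ((a₀ - b₀ : ℚ) : ℚ_[p]) + ((a₁ - b₁ : ℚ) : ℚ_[p]) * z
      + ((a₂ - b₂ : ℚ) : ℚ_[p]) * z ^ 2 = 0 := by
    push_cast
    have hd := hexp.symm.trans hexp'
    linear_combination hd
  obtain ⟨e₀, e₁, e₂⟩ := hind _ _ _ hcoef
  have hb₀ : b₀ = a₀ := by linarith
  have hb₁ : b₁ = a₁ := by linarith
  have hb₂ : b₂ = a₂ := by linarith
  subst hb₀ hb₁ hb₂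
  have haa : a' = b' := by
    rcases hdisj with ⟨z1, z2, ha1⟩ | ⟨hne, hnp, s, hs⟩
    · rcases hdisj' with ⟨-, -, hb1⟩ | ⟨hne', -, -⟩
      · rw [ha1, hb1]
      · exact absurd ⟨z1, z2⟩ hne'
    · rcases hdisj' with ⟨z1, z2, -⟩ | ⟨-, hnp', s', hs'⟩
      · exact absurd ⟨z1, z2⟩ hne
      · exact my_aprime_unique hnp hnp' hs hs' hapos hbpos
  subst haa
  have hcc : c = c' := my_c_unique hc hN hc' hN' hcn hcn'
  subst hcc
  rw [hh, hh']

end Helpers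

lemma my_phistep_unique {p : ℕ} [Fact p.Prime] (ε : ℤ) (z : ℚ_[p])
    (hind : ∀ c₀ c₁ c₂ : ℚ,
      (c₀ : ℚ_[p]) + (c₁ : ℚ_[p]) * z + (c₂ : ℚ_[p]) * z ^ 2 = 0 →
      c₀ = 0 ∧ c₁ = 0 ∧ c₂ = 0)
    {γ β β' : ℚ_[p] × ℚ_[p]}
    (H1 : PhiStep2 p ε z γ β) (H2 : PhiStep2 p ε z γ β') : β = β' := by
  obtain ⟨h₁, h₂, rfl, c1, c2⟩ := H1
  obtain ⟨h₁', h₂', rfl, c1', c2'⟩ := H2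
  rw [my_phicomp_unique z hind c1 c1', my_phicomp_unique z hind c2 c2']

/-- Theorem 4 of the paper: for a cubic `z` with minimal polynomial
`x³ + a₁x² + a₂x + a₃p^k` (`a_i ∈ ℤ`, `ord_p a₂ = ord_p a₃ = 0`, `k > 0`), the
`Φ₁^{[ε,z]}` remainders of `(z, z²)` are
`α₁ = (εz, −ε(z²+a₁z)/a₃)`, `α₂ = (−εz/a₃, −(z²+a₁z)/a₃)`, `α₃ = (z, z²+a₁z)`,
`α₄ = α₁`; hence the expansion is eventually periodic with period 3 from index 1. -/
theorem stmt_13 (p : ℕ) [Fact p.Prime] (a₁ a₂ a₃ : ℤ) (k : ℕ) (hk : 0 < k)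
    (h2 : ¬ (p : ℤ) ∣ a₂) (h3 : ¬ (p : ℤ) ∣ a₃)
    (z : ℚ_[p]) (hznorm : ‖z‖ < 1)
    (hz : z ^ 3 + (a₁ : ℚ_[p]) * z ^ 2 + (a₂ : ℚ_[p]) * z
        + (a₃ : ℚ_[p]) * (p : ℚ_[p]) ^ k = 0)
    (hind : ∀ c₀ c₁ c₂ : ℚ,
      (c₀ : ℚ_[p]) + (c₁ : ℚ_[p]) * z + (c₂ : ℚ_[p]) * z ^ 2 = 0 →
      c₀ = 0 ∧ c₁ = 0 ∧ c₂ = 0)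
    (ε : ℤ) (hε : ε = 1 ∨ ε = -1) :
    PhiStep2 p ε z (z, z ^ 2)
      ((ε : ℚ_[p]) * z, -(ε : ℚ_[p]) * (z ^ 2 + (a₁ : ℚ_[p]) * z) / (a₃ : ℚ_[p])) ∧
    PhiStep2 p ε z
      ((ε : ℚ_[p]) * z, -(ε : ℚ_[p]) * (z ^ 2 + (a₁ : ℚ_[p]) * z) / (a₃ : ℚ_[p]))
      (-(ε : ℚ_[p]) * z / (a₃ : ℚ_[p]), -(z ^ 2 + (a₁ : ℚ_[p]) * z) / (a₃ : ℚ_[p])) ∧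
    PhiStep2 p ε z
      (-(ε : ℚ_[p]) * z / (a₃ : ℚ_[p]), -(z ^ 2 + (a₁ : ℚ_[p]) * z) / (a₃ : ℚ_[p]))
      (z, z ^ 2 + (a₁ : ℚ_[p]) * z) ∧
    PhiStep2 p ε z (z, z ^ 2 + (a₁ : ℚ_[p]) * z)
      ((ε : ℚ_[p]) * z, -(ε : ℚ_[p]) * (z ^ 2 + (a₁ : ℚ_[p]) * z) / (a₃ : ℚ_[p])) ∧
    (∀ H : ℚ_[p] × ℚ_[p] → ℚ_[p] × ℚ_[p],
      (∀ γ : ℚ_[p] × ℚ_[p], γ.1 ≠ 0 →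
        (∃ c₀ c₁ c₂ : ℚ, γ.1 = (c₀ : ℚ_[p]) + (c₁ : ℚ_[p]) * z + (c₂ : ℚ_[p]) * z ^ 2) →
        (∃ c₀ c₁ c₂ : ℚ, γ.2 = (c₀ : ℚ_[p]) + (c₁ : ℚ_[p]) * z + (c₂ : ℚ_[p]) * z ^ 2) →
        PhiStep2 p ε z γ (H γ)) →
      ∀ n : ℕ, 1 ≤ n → H^[n + 3] (z, z ^ 2) = H^[n] (z, z ^ 2)) := by
  have hpp : p.Prime := Fact.out
  have hpne : ((p:ℚ_[p])) ≠ 0 := by exact_mod_cast hpp.ne_zero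
  have ha₃Z : a₃ ≠ 0 := fun h => h3 (h ▸ dvd_zero _)
  have ha₃ : (a₃:ℚ_[p]) ≠ 0 := by exact_mod_cast ha₃Z
  have hεZ : ε ≠ 0 := by rcases hε with rfl|rfl <;> norm_num
  have hεne : (ε:ℚ_[p]) ≠ 0 := by exact_mod_cast hεZ
  have hεn : ‖(ε:ℚ_[p])‖ = 1 := by rcases hε with rfl|rfl <;> simp
  have hεabs : ε.natAbs = 1 := by rcases hε with rfl|rfl <;> rfl
  have ha₃n : ‖(a₃:ℚ_[p])‖ = 1 := my_int_norm_one h3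
  have ha₂n : ‖(a₂:ℚ_[p])‖ = 1 := my_int_norm_one h2
  have ha₁n : ‖(a₁:ℚ_[p])‖ ≤ 1 := Padic.norm_int_le_one a₁
  have hnd1 : ¬ (p:ℤ) ∣ (1:ℤ) := by
    intro hd
    have h1 := Int.le_of_dvd one_pos hd
    have h2 := hpp.two_le
    omega
  have hzne : z ≠ 0 := by
    intro h0
    have h1 : (a₃:ℚ_[p]) * (p:ℚ_[p])^k = 0 := by rw [h0] at hz; linear_combination hz
    exact (mul_ne_zero ha₃ (pow_ne_zero k hpne)) h1
  have hwsmall : ‖z^2 + (a₁:ℚ_[p])*z‖ < 1 := by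
    calc ‖z^2 + (a₁:ℚ_[p])*z‖ ≤ max ‖z^2‖ ‖(a₁:ℚ_[p])*z‖ := Padic.nonarchimedean _ _
      _ < 1 := by
          rw [max_lt_iff, norm_pow, norm_mul]
          constructor
          · nlinarith [norm_nonneg z]
          · calc ‖(a₁:ℚ_[p])‖*‖z‖ ≤ 1*‖z‖ := mul_le_mul_of_nonneg_right ha₁n (norm_nonneg z)
              _ = ‖z‖ := one_mul _
              _ < 1 := hznorm
  have hwn : ‖z^2 + (a₁:ℚ_[p])*z + (a₂:ℚ_[p])‖ = 1 := by
    rw [Padic.add_eq_max_of_ne (by rw [ha₂n]; exact ne_of_lt hwsmall), ha₂n]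
    exact max_eq_right (le_of_lt hwsmall)
  have hppow : ‖((p:ℚ_[p]))^k‖ = (p:ℝ)^(-(k:ℤ)) := by
    rw [norm_pow, Padic.norm_p, inv_pow, ← zpow_natCast (p:ℝ), ← zpow_neg]
  have hzn : ‖z‖ = (p:ℝ)^(-(k:ℤ)) := by
    have key : z * (z^2 + (a₁:ℚ_[p])*z + (a₂:ℚ_[p])) = -((a₃:ℚ_[p]) * (p:ℚ_[p])^k) := by
      linear_combination hz
    have hcong := congrArg norm key
    rw [norm_mul, norm_neg, norm_mul, hwn, ha₃n, hppow, mul_one, one_mul] at hcong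
    exact hcong
  have hval : z.valuation = (k:ℤ) := my_val_of_norm hzne hzn
  have hw2ne : z + (a₁:ℚ_[p]) ≠ 0 := by
    intro h0
    have := hind (a₁:ℚ) 1 0 (by push_cast; linear_combination h0)
    exact one_ne_zero this.2.1
  have hZ2e : z^2 + (a₁:ℚ_[p])*z = z * (z + (a₁:ℚ_[p])) := by ring
  have hZ2ne : z^2 + (a₁:ℚ_[p])*z ≠ 0 := by rw [hZ2e]; exact mul_ne_zero hzne hw2ne
  have hZ2le : ‖z^2 + (a₁:ℚ_[p])*z‖ ≤ ‖z‖ := by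
    rw [hZ2e, norm_mul]
    have hb : ‖z + (a₁:ℚ_[p])‖ ≤ 1 :=
      le_trans (Padic.nonarchimedean _ _) (max_le (le_of_lt hznorm) ha₁n)
    nlinarith [norm_nonneg z]
  have hA1ne : (ε:ℚ_[p])*z ≠ 0 := mul_ne_zero hεne hzne
  have hA2ne : -(ε:ℚ_[p])*z/(a₃:ℚ_[p]) ≠ 0 :=
    div_ne_zero (by rw [neg_mul]; exact neg_ne_zero.2 hA1ne) ha₃
  have hB1ne : -(ε:ℚ_[p])*(z^2+(a₁:ℚ_[p])*z)/(a₃:ℚ_[p]) ≠ 0 :=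
    div_ne_zero (by rw [neg_mul]; exact neg_ne_zero.2 (mul_ne_zero hεne hZ2ne)) ha₃
  have hB2ne : -(z^2+(a₁:ℚ_[p])*z)/(a₃:ℚ_[p]) ≠ 0 :=
    div_ne_zero (neg_ne_zero.2 hZ2ne) ha₃
  have hz2ne : z^2 ≠ 0 := pow_ne_zero 2 hzne
  have hnA1 : ‖(ε:ℚ_[p])*z‖ = ‖z‖ := by rw [norm_mul, hεn, one_mul]
  have hnA2 : ‖-(ε:ℚ_[p])*z/(a₃:ℚ_[p])‖ = ‖z‖ := by
    rw [norm_div, neg_mul, norm_neg, norm_mul, hεn, one_mul, ha₃n, div_one]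
  have hnB1 : ‖-(ε:ℚ_[p])*(z^2+(a₁:ℚ_[p])*z)/(a₃:ℚ_[p])‖ = ‖z^2+(a₁:ℚ_[p])*z‖ := by
    rw [norm_div, neg_mul, norm_neg, norm_mul, hεn, one_mul, ha₃n, div_one]
  have hnB2 : ‖-(z^2+(a₁:ℚ_[p])*z)/(a₃:ℚ_[p])‖ = ‖z^2+(a₁:ℚ_[p])*z‖ := by
    rw [norm_div, norm_neg, ha₃n, div_one]
  have hv1 : ((ε:ℚ_[p])*z).valuation = (k:ℤ) := my_val_of_norm hA1ne (hnA1.trans hzn)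
  have hv2 : (-(ε:ℚ_[p])*z/(a₃:ℚ_[p])).valuation = (k:ℤ) := my_val_of_norm hA2ne (hnA2.trans hzn)
  have hm1 : max (z.valuation - (z^2).valuation) 0 = 0 :=
    my_max_zero hzne hz2ne (by rw [norm_pow]; nlinarith [norm_nonneg z, hznorm.le])
  have hm2 : max (((ε:ℚ_[p])*z).valuation
      - (-(ε:ℚ_[p])*(z^2+(a₁:ℚ_[p])*z)/(a₃:ℚ_[p])).valuation) 0 = 0 :=
    my_max_zero hA1ne hB1ne (by rw [hnA1, hnB1]; exact hZ2le)
  have hm3 : max ((-(ε:ℚ_[p])*z/(a₃:ℚ_[p])).valuation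
      - (-(z^2+(a₁:ℚ_[p])*z)/(a₃:ℚ_[p])).valuation) 0 = 0 :=
    my_max_zero hA2ne hB2ne (by rw [hnA2, hnB2]; exact hZ2le)
  have hm4 : max (z.valuation - (z^2+(a₁:ℚ_[p])*z).valuation) 0 = 0 :=
    my_max_zero hzne hZ2ne hZ2le
  have s1 : PhiStep2 p ε z (z, z ^ 2)
      ((ε : ℚ_[p]) * z, -(ε : ℚ_[p]) * (z ^ 2 + (a₁ : ℚ_[p]) * z) / (a₃ : ℚ_[p])) := by
    refine ⟨-(ε:ℚ_[p])*(z^2+(a₁:ℚ_[p])*z)/(a₃:ℚ_[p]), (ε:ℚ_[p])*z, rfl, ?_, ?_⟩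
    · show PhiComp p z ((ε:ℚ_[p]) * (p:ℚ_[p]) ^ z.valuation / z) _
      rw [hval, zpow_natCast]
      apply my_mk_phicomp' z hznorm (-ε*a₂) (-ε*a₁) (-ε) a₃ h3
        (Or.inl (by simpa using hεabs))
      · push_cast
        field_simp
        linear_combination hz
      · push_cast
        field_simp
        try ring
    · show PhiComp p z
        ((ε:ℚ_[p]) * (p:ℚ_[p]) ^ (max (z.valuation - (z^2).valuation) 0) * z^2 / z) _
      rw [hm1, zpow_zero]
      apply my_mk_phicomp' z hznorm 0 ε 0 1 hnd1 (Or.inr ⟨rfl, hεabs⟩)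
      · push_cast
        field_simp
        try ring
      · push_cast
        ring
  have s2 : PhiStep2 p ε z
      ((ε : ℚ_[p]) * z, -(ε : ℚ_[p]) * (z ^ 2 + (a₁ : ℚ_[p]) * z) / (a₃ : ℚ_[p]))
      (-(ε : ℚ_[p]) * z / (a₃ : ℚ_[p]),
        -(z ^ 2 + (a₁ : ℚ_[p]) * z) / (a₃ : ℚ_[p])) := by
    refine ⟨-(z^2+(a₁:ℚ_[p])*z)/(a₃:ℚ_[p]), -(ε:ℚ_[p])*z/(a₃:ℚ_[p]), rfl, ?_, ?_⟩
    · show PhiComp p z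
        ((ε:ℚ_[p]) * (p:ℚ_[p]) ^ ((ε:ℚ_[p])*z).valuation / ((ε:ℚ_[p])*z)) _
      rw [hv1, zpow_natCast]
      apply my_mk_phicomp' z hznorm (-a₂) (-a₁) (-1) a₃ h3 (Or.inl (by norm_num))
      · push_cast
        field_simp
        linear_combination hz
      · push_cast
        field_simp
        try ring
    · show PhiComp p z
        ((ε:ℚ_[p]) * (p:ℚ_[p]) ^ (max (((ε:ℚ_[p])*z).valuation
          - (-(ε:ℚ_[p])*(z^2+(a₁:ℚ_[p])*z)/(a₃:ℚ_[p])).valuation) 0)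
          * (-(ε:ℚ_[p])*(z^2+(a₁:ℚ_[p])*z)/(a₃:ℚ_[p])) / ((ε:ℚ_[p])*z)) _
      rw [hm2, zpow_zero]
      apply my_mk_phicomp' z hznorm (-ε*a₁) (-ε) 0 a₃ h3
        (Or.inr ⟨rfl, by simpa using hεabs⟩)
      · push_cast
        field_simp
        try ring
      · push_cast
        field_simp
        try ring
  have s3 : PhiStep2 p ε z
      (-(ε : ℚ_[p]) * z / (a₃ : ℚ_[p]), -(z ^ 2 + (a₁ : ℚ_[p]) * z) / (a₃ : ℚ_[p]))
      (z, z ^ 2 + (a₁ : ℚ_[p]) * z) := by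
    refine ⟨z^2+(a₁:ℚ_[p])*z, z, rfl, ?_, ?_⟩
    · show PhiComp p z
        ((ε:ℚ_[p]) * (p:ℚ_[p]) ^ (-(ε:ℚ_[p])*z/(a₃:ℚ_[p])).valuation
          / (-(ε:ℚ_[p])*z/(a₃:ℚ_[p]))) _
      rw [hv2, zpow_natCast]
      apply my_mk_phicomp' z hznorm a₂ a₁ 1 1 hnd1 (Or.inl rfl)
      · push_cast
        field_simp
        linear_combination -hz
      · push_cast
        ring
    · show PhiComp p z
        ((ε:ℚ_[p]) * (p:ℚ_[p]) ^ (max ((-(ε:ℚ_[p])*z/(a₃:ℚ_[p])).valuation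
          - (-(z^2+(a₁:ℚ_[p])*z)/(a₃:ℚ_[p])).valuation) 0)
          * (-(z^2+(a₁:ℚ_[p])*z)/(a₃:ℚ_[p])) / (-(ε:ℚ_[p])*z/(a₃:ℚ_[p]))) _
      rw [hm3, zpow_zero]
      apply my_mk_phicomp' z hznorm a₁ 1 0 1 hnd1 (Or.inr ⟨rfl, rfl⟩)
      · push_cast
        field_simp
        try ring
      · push_cast
        ring
  have s4 : PhiStep2 p ε z (z, z ^ 2 + (a₁ : ℚ_[p]) * z)
      ((ε : ℚ_[p]) * z, -(ε : ℚ_[p]) * (z ^ 2 + (a₁ : ℚ_[p]) * z) / (a₃ : ℚ_[p])) := by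
    refine ⟨-(ε:ℚ_[p])*(z^2+(a₁:ℚ_[p])*z)/(a₃:ℚ_[p]), (ε:ℚ_[p])*z, rfl, ?_, ?_⟩
    · show PhiComp p z ((ε:ℚ_[p]) * (p:ℚ_[p]) ^ z.valuation / z) _
      rw [hval, zpow_natCast]
      apply my_mk_phicomp' z hznorm (-ε*a₂) (-ε*a₁) (-ε) a₃ h3
        (Or.inl (by simpa using hεabs))
      · push_cast
        field_simp
        linear_combination hz
      · push_cast
        field_simp
        try ring
    · show PhiComp p z
        ((ε:ℚ_[p]) * (p:ℚ_[p]) ^ (max (z.valuation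
          - (z^2+(a₁:ℚ_[p])*z).valuation) 0) * (z^2+(a₁:ℚ_[p])*z) / z) _
      rw [hm4, zpow_zero]
      apply my_mk_phicomp' z hznorm (ε*a₁) ε 0 1 hnd1 (Or.inr ⟨rfl, hεabs⟩)
      · push_cast
        field_simp
        try ring
      · push_cast
        ring
  refine ⟨s1, s2, s3, s4, ?_⟩
  intro H hH
  have e0 : H (z, z ^ 2)
      = ((ε : ℚ_[p]) * z, -(ε : ℚ_[p]) * (z ^ 2 + (a₁ : ℚ_[p]) * z) / (a₃ : ℚ_[p])) :=
    my_phistep_unique ε z hind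
      (hH _ hzne ⟨0, 1, 0, by norm_num⟩ ⟨0, 0, 1, by norm_num⟩) s1
  have e1 : H ((ε : ℚ_[p]) * z, -(ε : ℚ_[p]) * (z ^ 2 + (a₁ : ℚ_[p]) * z) / (a₃ : ℚ_[p]))
      = (-(ε : ℚ_[p]) * z / (a₃ : ℚ_[p]), -(z ^ 2 + (a₁ : ℚ_[p]) * z) / (a₃ : ℚ_[p])) :=
    my_phistep_unique ε z hind
      (hH _ hA1ne ⟨0, (ε:ℚ), 0, by push_cast; ring⟩
        ⟨0, ((-ε*a₁ : ℤ):ℚ)/((a₃:ℤ):ℚ), ((-ε : ℤ):ℚ)/((a₃:ℤ):ℚ), by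
          push_cast
          field_simp
          try ring⟩) s2
  have e2 : H (-(ε : ℚ_[p]) * z / (a₃ : ℚ_[p]), -(z ^ 2 + (a₁ : ℚ_[p]) * z) / (a₃ : ℚ_[p]))
      = (z, z ^ 2 + (a₁ : ℚ_[p]) * z) :=
    my_phistep_unique ε z hind
      (hH _ hA2ne ⟨0, ((-ε : ℤ):ℚ)/((a₃:ℤ):ℚ), 0, by
          push_cast
          field_simp
          try ring⟩
        ⟨0, ((-a₁ : ℤ):ℚ)/((a₃:ℤ):ℚ), ((-1 : ℤ):ℚ)/((a₃:ℤ):ℚ), by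
          push_cast
          field_simp
          try ring⟩) s3
  have e3 : H (z, z ^ 2 + (a₁ : ℚ_[p]) * z)
      = ((ε : ℚ_[p]) * z, -(ε : ℚ_[p]) * (z ^ 2 + (a₁ : ℚ_[p]) * z) / (a₃ : ℚ_[p])) :=
    my_phistep_unique ε z hind
      (hH _ hzne ⟨0, 1, 0, by norm_num⟩ ⟨0, (a₁:ℚ), 1, by push_cast; ring⟩) s4
  intro n hn
  have i1 : H^[1] (z, z ^ 2)
      = ((ε : ℚ_[p]) * z, -(ε : ℚ_[p]) * (z ^ 2 + (a₁ : ℚ_[p]) * z) / (a₃ : ℚ_[p])) := by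
    simpa using e0
  have i2 : H^[2] (z, z ^ 2)
      = (-(ε : ℚ_[p]) * z / (a₃ : ℚ_[p]), -(z ^ 2 + (a₁ : ℚ_[p]) * z) / (a₃ : ℚ_[p])) := by
    rw [show (2:ℕ) = 1 + 1 from rfl, Function.iterate_succ_apply', i1, e1]
  have i3 : H^[3] (z, z ^ 2) = (z, z ^ 2 + (a₁ : ℚ_[p]) * z) := by
    rw [show (3:ℕ) = 2 + 1 from rfl, Function.iterate_succ_apply', i2, e2]
  have i4 : H^[4] (z, z ^ 2)
      = ((ε : ℚ_[p]) * z, -(ε : ℚ_[p]) * (z ^ 2 + (a₁ : ℚ_[p]) * z) / (a₃ : ℚ_[p])) := by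
    rw [show (4:ℕ) = 3 + 1 from rfl, Function.iterate_succ_apply', i3, e3]
  refine Nat.le_induction ?_ ?_ n hn
  · show H^[1 + 3] (z, z ^ 2) = H^[1] (z, z ^ 2)
    rw [show (1 + 3 : ℕ) = 4 from rfl, i4, i1]
  · intro m hm ih
    rw [show m + 1 + 3 = (m + 3) + 1 by omega, Function.iterate_succ_apply', ih]
    exact (Function.iterate_succ_apply' H m _).symm
end

section
/- In the setting of a c-map with inverse step T⁻¹ on E = (pℤ_p)^s ∩ K^s: if the pivot coordinate α_{φ(α)} of α ∈ E is nonzero, then for all x, y ∈ E, |T⁻¹(x) − T⁻¹(y)|_p ≤ p^{−j} |x − y|_p where j = min{ord_p(α_i) : 1 ≤ i ≤ s} ≥ 1; and if α_{φ(α)} = 0 then |T⁻¹(x) − T⁻¹(y)|_p = |x − y|_p. -/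
/-- Lemma 5 of the paper: contraction property of the inverse c-map step on
`E = (pℤ_p)^s`.  If the pivot coordinate `α_{φ(α)}` is nonzero, then for all
`x, y ∈ E`, `|T⁻¹x − T⁻¹y|_p ≤ p^{−j}|x − y|_p` with `j = min_i ord_p(α_i)`;
if the pivot coordinate were zero the inverse step `x ↦ A⁻¹(x − γ)` is an isometry. -/
theorem stmt_16 (p : ℕ) [Fact p.Prime] (s : ℕ) (hs : 0 < s)
    (α : Fin s → ℚ_[p]) (hαE : ∀ i, ‖α i‖ < 1) (hα0 : ∀ i, α i ≠ 0)
    (jp : Fin s)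
    (u v : ℚ) (hu : ‖(u : ℚ_[p])‖ = 1) (hv : ‖(v : ℚ_[p])‖ = 1)
    (u' : Fin s → ℚ) (hu' : ∀ i, ‖(u' i : ℚ_[p])‖ = 1)
    (w' : Fin s → ℚ) (hw' : ∀ i, ‖(w' i : ℚ_[p])‖ ≤ 1)
    (B : Matrix (Fin s) (Fin s) ℚ)
    (hB1 : ∀ i j, ‖(B i j : ℚ_[p])‖ ≤ 1) (hB2 : ‖((B.det : ℚ) : ℚ_[p])‖ = 1)
    (γ : Fin s → ℚ) (hγ : ∀ i, ‖(γ i : ℚ_[p])‖ < 1)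
    (Tinv : (Fin s → ℚ_[p]) → Fin s → ℚ_[p])
    (hTinvP : ∀ x, Tinv x jp =
      (u : ℚ_[p]) * (p : ℚ_[p]) ^ (α jp).valuation
        / ((∑ l, (B jp l : ℚ_[p]) * (x l - (γ l : ℚ_[p]))) + (v : ℚ_[p])))
    (hTinvN : ∀ x, ∀ i, i ≠ jp → Tinv x i =
      (u' i : ℚ_[p]) * (p : ℚ_[p]) ^ (min ((α jp).valuation) ((α i).valuation))
        * ((∑ l, (B i l : ℚ_[p]) * (x l - (γ l : ℚ_[p]))) + (w' i : ℚ_[p]))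
        / ((∑ l, (B jp l : ℚ_[p]) * (x l - (γ l : ℚ_[p]))) + (v : ℚ_[p]))) :
    (∀ x y : Fin s → ℚ_[p], (∀ i, ‖x i‖ < 1) → (∀ i, ‖y i‖ < 1) →
      ∀ i, ‖Tinv x i - Tinv y i‖ ≤
        (p : ℝ) ^ (-(Finset.univ.inf' ⟨jp, Finset.mem_univ jp⟩
            (fun l => (α l).valuation)))
          * Finset.univ.sup' ⟨jp, Finset.mem_univ jp⟩ (fun l => ‖x l - y l‖)) ∧
    (1 ≤ Finset.univ.inf' ⟨jp, Finset.mem_univ jp⟩ (fun l => (α l).valuation)) ∧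
    (∀ x y : Fin s → ℚ_[p], (∀ i, ‖x i‖ < 1) → (∀ i, ‖y i‖ < 1) →
      Finset.univ.sup' ⟨jp, Finset.mem_univ jp⟩
          (fun i => ‖(∑ l, (B i l : ℚ_[p]) * (x l - (γ l : ℚ_[p])))
            - (∑ l, (B i l : ℚ_[p]) * (y l - (γ l : ℚ_[p])))‖)
        = Finset.univ.sup' ⟨jp, Finset.mem_univ jp⟩ (fun i => ‖x i - y i‖)) := by
  have hp1 : (1 : ℝ) < (p : ℝ) := by
    exact_mod_cast (Fact.out : p.Prime).one_lt
  have hne : (Finset.univ : Finset (Fin s)).Nonempty := ⟨jp, Finset.mem_univ jp⟩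
  set J := Finset.univ.inf' hne (fun l => (α l).valuation) with hJ
  -- ultrametric bound for sums ∑ c l * d l with ‖c l‖ ≤ 1
  have sumle : ∀ (c d : Fin s → ℚ_[p]), (∀ l, ‖c l‖ ≤ 1) →
      ‖∑ l, c l * d l‖ ≤ Finset.univ.sup' hne (fun l => ‖d l‖) := by
    intro c d hc
    refine (hne.norm_sum_le_sup'_norm _).trans (Finset.sup'_le _ _ fun l _ => ?_)
    calc ‖c l * d l‖ = ‖c l‖ * ‖d l‖ := norm_mul _ _
      _ ≤ 1 * ‖d l‖ := mul_le_mul_of_nonneg_right (hc l) (norm_nonneg _)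
      _ = ‖d l‖ := one_mul _
      _ ≤ _ := Finset.le_sup' (fun l => ‖d l‖) (Finset.mem_univ l)
  -- sup' of norms is nonnegative
  have supnn : ∀ (d : Fin s → ℚ_[p]),
      0 ≤ Finset.univ.sup' hne (fun l => ‖d l‖) :=
    fun d => le_trans (norm_nonneg (d jp)) (Finset.le_sup' (fun l => ‖d l‖) (Finset.mem_univ jp))
  -- Part 2: 1 ≤ J
  have hJ1 : 1 ≤ J := by
    refine Finset.le_inf' _ _ fun i _ => ?_
    by_contra h
    push_neg at h
    have hle : (0 : ℤ) ≤ -(α i).valuation := by omega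
    have : (1 : ℝ) ≤ ‖α i‖ := by
      rw [Padic.norm_eq_zpow_neg_valuation (hα0 i)]
      calc (1 : ℝ) = (p : ℝ) ^ (0 : ℤ) := by simp
        _ ≤ (p : ℝ) ^ (-(α i).valuation) := zpow_le_zpow_right₀ hp1.le hle
    linarith [hαE i]
  -- affine sums: ‖∑ B i l (z l - γ l)‖ < 1 when ‖z‖ < 1
  have hSlt : ∀ (i : Fin s) (z : Fin s → ℚ_[p]), (∀ l, ‖z l‖ < 1) →
      ‖∑ l, (B i l : ℚ_[p]) * (z l - (γ l : ℚ_[p]))‖ < 1 := by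
    intro i z hz
    refine lt_of_le_of_lt (sumle _ _ (hB1 i)) ?_
    rw [Finset.sup'_lt_iff]
    intro l _
    calc ‖z l - (γ l : ℚ_[p])‖ = ‖z l + (-(γ l : ℚ_[p]))‖ := by ring_nf
      _ ≤ max ‖z l‖ ‖(-(γ l : ℚ_[p]))‖ := Padic.nonarchimedean _ _
      _ < 1 := by rw [norm_neg]; exact max_lt (hz l) (hγ l)
  have hDen : ∀ (z : Fin s → ℚ_[p]), (∀ l, ‖z l‖ < 1) →
      ‖(∑ l, (B jp l : ℚ_[p]) * (z l - (γ l : ℚ_[p]))) + (v : ℚ_[p])‖ = 1 := by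
    intro z hz
    have h1 := hSlt jp z hz
    have hne' : ‖∑ l, (B jp l : ℚ_[p]) * (z l - (γ l : ℚ_[p]))‖ ≠ ‖(v : ℚ_[p])‖ := by
      rw [hv]; exact ne_of_lt h1
    rw [Padic.add_eq_max_of_ne hne', hv]
    exact max_eq_right h1.le
  -- difference of affine sums
  have hSdiff : ∀ (i : Fin s) (x y : Fin s → ℚ_[p]),
      (∑ l, (B i l : ℚ_[p]) * (x l - (γ l : ℚ_[p])))
        - (∑ l, (B i l : ℚ_[p]) * (y l - (γ l : ℚ_[p])))
      = ∑ l, (B i l : ℚ_[p]) * (x l - y l) := by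
    intro i x y
    rw [← Finset.sum_sub_distrib]
    exact Finset.sum_congr rfl fun l _ => by ring
  have hSdiffLe : ∀ (i : Fin s) (x y : Fin s → ℚ_[p]),
      ‖(∑ l, (B i l : ℚ_[p]) * (x l - (γ l : ℚ_[p])))
        - (∑ l, (B i l : ℚ_[p]) * (y l - (γ l : ℚ_[p])))‖
      ≤ Finset.univ.sup' hne (fun l => ‖x l - y l‖) := by
    intro i x y
    rw [hSdiff]
    exact sumle _ _ (hB1 i)
  -- Part 3 : isometry of the affine map
  have part3 : ∀ x y : Fin s → ℚ_[p], (∀ i, ‖x i‖ < 1) → (∀ i, ‖y i‖ < 1) →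
      Finset.univ.sup' hne
          (fun i => ‖(∑ l, (B i l : ℚ_[p]) * (x l - (γ l : ℚ_[p])))
            - (∑ l, (B i l : ℚ_[p]) * (y l - (γ l : ℚ_[p])))‖)
        = Finset.univ.sup' hne (fun i => ‖x i - y i‖) := by
    intro x y _ _
    set d : Fin s → ℚ_[p] := fun l => x l - y l with hd
    -- integral matrix
    set M : Matrix (Fin s) (Fin s) ℤ_[p] :=
      Matrix.of fun i j => (⟨(B i j : ℚ_[p]), hB1 i j⟩ : ℤ_[p]) with hM
    have hdetcoe : ((M.det : ℤ_[p]) : ℚ_[p]) = ((B.det : ℚ) : ℚ_[p]) := by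
      have h1 := RingHom.map_det (PadicInt.Coe.ringHom (p := p)) M
      have h2 := RingHom.map_det (Rat.castHom ℚ_[p]) B
      have h3 : (PadicInt.Coe.ringHom (p := p)).mapMatrix M
          = (Rat.castHom ℚ_[p]).mapMatrix B := by
        ext i j
        rfl
      rw [show ((M.det : ℤ_[p]) : ℚ_[p]) = PadicInt.Coe.ringHom (p := p) M.det from rfl,
        h1, h3, ← h2]
      rfl
    have hdetu : IsUnit M.det := by
      rw [PadicInt.isUnit_iff, PadicInt.norm_def, hdetcoe]
      exact hB2
    set N := M⁻¹ with hN
    have hNM : N * M = 1 := Matrix.nonsing_inv_mul M hdetu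
    -- recover d from the image
    have hrec : ∀ (l : Fin s),
        d l = ∑ i, ((N l i : ℤ_[p]) : ℚ_[p]) * ∑ m, (B i m : ℚ_[p]) * d m := by
      intro l
      have hunit : ∀ m, (∑ i, ((N l i : ℤ_[p]) : ℚ_[p]) * (B i m : ℚ_[p]))
          = if l = m then 1 else 0 := by
        intro m
        have h1 : (N * M) l m = (1 : Matrix (Fin s) (Fin s) ℤ_[p]) l m := by rw [hNM]
        have h2 : (((N * M) l m : ℤ_[p]) : ℚ_[p])
            = ∑ i, ((N l i : ℤ_[p]) : ℚ_[p]) * (B i m : ℚ_[p]) := by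
          calc (((N * M) l m : ℤ_[p]) : ℚ_[p])
              = PadicInt.Coe.ringHom (p := p) (∑ j, N l j * M j m) := by
                rw [Matrix.mul_apply]
                rfl
            _ = ∑ j, PadicInt.Coe.ringHom (p := p) (N l j * M j m) := map_sum _ _ _
            _ = ∑ j, ((N l j : ℤ_[p]) : ℚ_[p]) * (B j m : ℚ_[p]) := by
                refine Finset.sum_congr rfl fun j _ => ?_
                rw [map_mul]
                rfl
        rw [← h2, h1, Matrix.one_apply]
        split <;> simp
      calc d l = ∑ m, (if l = m then (1:ℚ_[p]) else 0) * d m := by simp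
        _ = ∑ m, (∑ i, ((N l i : ℤ_[p]) : ℚ_[p]) * (B i m : ℚ_[p])) * d m := by
            refine Finset.sum_congr rfl fun m _ => ?_
            rw [hunit m]
        _ = ∑ m, ∑ i, ((N l i : ℤ_[p]) : ℚ_[p]) * ((B i m : ℚ_[p]) * d m) := by
            refine Finset.sum_congr rfl fun m _ => ?_
            rw [Finset.sum_mul]
            exact Finset.sum_congr rfl fun i _ => by ring
        _ = ∑ i, ((N l i : ℤ_[p]) : ℚ_[p]) * ∑ m, (B i m : ℚ_[p]) * d m := by
            rw [Finset.sum_comm]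
            exact Finset.sum_congr rfl fun i _ => by rw [Finset.mul_sum]
    apply le_antisymm
    · refine Finset.sup'_le _ _ fun i _ => ?_
      exact hSdiffLe i x y
    · refine Finset.sup'_le _ _ fun l _ => ?_
      calc ‖x l - y l‖ = ‖∑ i, ((N l i : ℤ_[p]) : ℚ_[p]) * ∑ m, (B i m : ℚ_[p]) * d m‖ := by
            rw [← hrec l]
        _ ≤ Finset.univ.sup' hne (fun i => ‖∑ m, (B i m : ℚ_[p]) * d m‖) := by
            refine sumle _ _ fun i => ?_
            rw [← PadicInt.norm_def]
            exact PadicInt.norm_le_one _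
        _ ≤ _ := by
            refine Finset.sup'_le _ _ fun i _ => ?_
            have he : (∑ m, (B i m : ℚ_[p]) * d m)
                = (∑ l, (B i l : ℚ_[p]) * (x l - (γ l : ℚ_[p])))
                  - (∑ l, (B i l : ℚ_[p]) * (y l - (γ l : ℚ_[p]))) := by
              rw [hSdiff i x y]
            rw [he]
            exact Finset.le_sup'
              (fun i => ‖(∑ l, (B i l : ℚ_[p]) * (x l - (γ l : ℚ_[p])))
                - (∑ l, (B i l : ℚ_[p]) * (y l - (γ l : ℚ_[p])))‖)
              (Finset.mem_univ i)
  -- powers of p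
  have hpow : ∀ (n : ℤ), J ≤ n → ‖((p : ℚ_[p])) ^ n‖ ≤ (p : ℝ) ^ (-J) := by
    intro n hn
    rw [Padic.norm_p_zpow]
    exact zpow_le_zpow_right₀ hp1.le (by omega)
  -- Part 1
  refine ⟨?_, hJ1, part3⟩
  intro x y hx hy i
  set Dx := (∑ l, (B jp l : ℚ_[p]) * (x l - (γ l : ℚ_[p]))) with hDx
  set Dy := (∑ l, (B jp l : ℚ_[p]) * (y l - (γ l : ℚ_[p]))) with hDy
  have hDx1 : ‖Dx + (v : ℚ_[p])‖ = 1 := hDen x hx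
  have hDy1 : ‖Dy + (v : ℚ_[p])‖ = 1 := hDen y hy
  have hDx0 : Dx + (v : ℚ_[p]) ≠ 0 := by
    intro h; rw [h] at hDx1; simp at hDx1
  have hDy0 : Dy + (v : ℚ_[p]) ≠ 0 := by
    intro h; rw [h] at hDy1; simp at hDy1
  have hDdiff : ‖Dx - Dy‖ ≤ Finset.univ.sup' hne (fun l => ‖x l - y l‖) :=
    hSdiffLe jp x y
  by_cases hi : i = jp
  · subst hi
    have heq : Tinv x i - Tinv y i
        = (u : ℚ_[p]) * (p : ℚ_[p]) ^ (α i).valuation * (Dy - Dx)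
          / ((Dx + (v : ℚ_[p])) * (Dy + (v : ℚ_[p]))) := by
      rw [hTinvP x, hTinvP y, ← hDx, ← hDy]
      field_simp
      ring
    rw [heq, norm_div, norm_mul, norm_mul, hu, norm_mul, hDx1, hDy1]
    simp only [one_mul, mul_one, div_one]
    have h1 : ‖(p : ℚ_[p]) ^ (α i).valuation‖ ≤ (p : ℝ) ^ (-J) :=
      hpow _ (Finset.inf'_le _ (Finset.mem_univ i))
    have h2 : ‖Dy - Dx‖ ≤ Finset.univ.sup' hne (fun l => ‖x l - y l‖) := by
      rw [norm_sub_rev]; exact hDdiff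
    exact mul_le_mul h1 h2 (norm_nonneg _)
      (le_trans (norm_nonneg _) h1)
  · set Nx := (∑ l, (B i l : ℚ_[p]) * (x l - (γ l : ℚ_[p]))) + (w' i : ℚ_[p]) with hNx
    set Ny := (∑ l, (B i l : ℚ_[p]) * (y l - (γ l : ℚ_[p]))) + (w' i : ℚ_[p]) with hNy
    have hNx1 : ‖Nx‖ ≤ 1 := by
      calc ‖Nx‖ ≤ max ‖∑ l, (B i l : ℚ_[p]) * (x l - (γ l : ℚ_[p]))‖ ‖(w' i : ℚ_[p])‖ :=
            Padic.nonarchimedean _ _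
        _ ≤ 1 := max_le (le_of_lt (hSlt i x hx)) (hw' i)
    have hNdiff : ‖Nx - Ny‖ ≤ Finset.univ.sup' hne (fun l => ‖x l - y l‖) := by
      have : Nx - Ny = (∑ l, (B i l : ℚ_[p]) * (x l - (γ l : ℚ_[p])))
          - (∑ l, (B i l : ℚ_[p]) * (y l - (γ l : ℚ_[p]))) := by ring
      rw [this]; exact hSdiffLe i x y
    have heq : Tinv x i - Tinv y i
        = (u' i : ℚ_[p]) * (p : ℚ_[p]) ^ (min ((α jp).valuation) ((α i).valuation))
          * (Nx * (Dy - Dx) + (Dx + (v : ℚ_[p])) * (Nx - Ny))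
          / ((Dx + (v : ℚ_[p])) * (Dy + (v : ℚ_[p]))) := by
      rw [hTinvN x i hi, hTinvN y i hi, ← hDx, ← hDy, ← hNx, ← hNy]
      field_simp
      ring
    rw [heq, norm_div, norm_mul, norm_mul, norm_mul, hu' i, hDx1, hDy1]
    simp only [one_mul, mul_one, div_one]
    have h1 : ‖(p : ℚ_[p]) ^ (min ((α jp).valuation) ((α i).valuation))‖ ≤ (p : ℝ) ^ (-J) := by
      refine hpow _ (le_min ?_ ?_)
      · exact Finset.inf'_le _ (Finset.mem_univ jp)
      · exact Finset.inf'_le _ (Finset.mem_univ i)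
    have h2 : ‖Nx * (Dy - Dx) + (Dx + (v : ℚ_[p])) * (Nx - Ny)‖
        ≤ Finset.univ.sup' hne (fun l => ‖x l - y l‖) := by
      refine le_trans (Padic.nonarchimedean _ _) (max_le ?_ ?_)
      · rw [norm_mul]
        calc ‖Nx‖ * ‖Dy - Dx‖ ≤ 1 * ‖Dy - Dx‖ :=
              mul_le_mul_of_nonneg_right hNx1 (norm_nonneg _)
          _ = ‖Dy - Dx‖ := one_mul _
          _ ≤ _ := by rw [norm_sub_rev]; exact hDdiff
      · rw [norm_mul, hDx1, one_mul]
        exact hNdiff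
    exact mul_le_mul h1 h2 (norm_nonneg _) (le_trans (norm_nonneg _) h1)
end
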